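/- Let M be a compact smooth manifold and γ a closed 1-form on M which is nowhere vanishing and whose de Rham class satisfies [γ] ∈ H¹(M, ℤ) (i.e. [γ] is an integral class). Then there exists a submersion f : M → S¹ such that f*(dt) = γ, where dt is the canonical 1-form on S¹. -/

import Mathlib

noncomputable section

open scoped Manifold

open Set Filter MeasureTheory intervalIntegral

set_option linter.unusedSectionVars false

namespace Tischler

variable {m : ℕ} {M : Type} [TopologicalSpace M]
  [ChartedSpace (EuclideanSpace ℝ (Fin m)) M] [IsManifold (𝓡 m) (⊤ : ℕ∞) M]

/-- The integrand `γ(c(t))(c'(t))`. -/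
def vel (γ : ∀ x : M, TangentSpace (𝓡 m) x →L[ℝ] ℝ) (c : ℝ → M) (t : ℝ) : ℝ :=
  γ (c t) (mfderiv 𝓘(ℝ, ℝ) (𝓡 m) c t (1:ℝ))

/-- The period/integral of `γ` along `c` over `[0,1]`. -/
def per (γ : ∀ x : M, TangentSpace (𝓡 m) x →L[ℝ] ℝ) (c : ℝ → M) : ℝ :=
  ∫ t in (0:ℝ)..1, vel γ c t

def Closed (γ : ∀ x : M, TangentSpace (𝓡 m) x →L[ℝ] ℝ) : Prop :=
  ∀ x₀ : M, ∃ u ∈ nhds x₀, ∃ g : M → ℝ, ContMDiffOn (𝓡 m) 𝓘(ℝ, ℝ) (⊤ : ℕ∞) g u ∧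
      ∀ x ∈ u, (mfderiv (𝓡 m) 𝓘(ℝ, ℝ) g x : TangentSpace (𝓡 m) x →L[ℝ] ℝ) = γ x

variable {γ : ∀ x : M, TangentSpace (𝓡 m) x →L[ℝ] ℝ} {c c₁ c₂ : ℝ → M}

theorem vel_congr {s : Set ℝ} (hs : IsOpen s) (h : EqOn c₁ c₂ s) {t : ℝ} (ht : t ∈ s) :
    vel γ c₁ t = vel γ c₂ t := by
  have hev : c₁ =ᶠ[nhds t] c₂ := eventuallyEq_of_mem (hs.mem_nhds ht) h
  have h1 : c₁ t = c₂ t := h ht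
  have h2 : mfderiv 𝓘(ℝ, ℝ) (𝓡 m) c₁ t = mfderiv 𝓘(ℝ, ℝ) (𝓡 m) c₂ t := hev.mfderiv_eq
  unfold vel
  rw [h2, h1]

theorem vel_const_on {s : Set ℝ} (hs : IsOpen s) {y : M} (h : ∀ τ ∈ s, c τ = y) {t : ℝ}
    (ht : t ∈ s) : vel γ c t = 0 := by
  have hev : c =ᶠ[nhds t] fun _ => y := eventuallyEq_of_mem (hs.mem_nhds ht) h
  unfold vel
  rw [hev.mfderiv_eq, mfderiv_const]
  exact map_zero (γ (c t))

theorem integral_vel_congr {a b : ℝ} (hab : a ≤ b)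
    (h : ∀ t ∈ Ioo a b, vel γ c₁ t = vel γ c₂ t) :
    ∫ t in a..b, vel γ c₁ t = ∫ t in a..b, vel γ c₂ t := by
  rw [intervalIntegral.integral_of_le hab, intervalIntegral.integral_of_le hab,
    integral_Ioc_eq_integral_Ioo, integral_Ioc_eq_integral_Ioo]
  exact setIntegral_congr_fun measurableSet_Ioo h

theorem integral_vel_zero {a b : ℝ} (hab : a ≤ b) (h : ∀ t ∈ Ioo a b, vel γ c t = 0) :
    ∫ t in a..b, vel γ c t = 0 := by
  rw [intervalIntegral.integral_of_le hab, integral_Ioc_eq_integral_Ioo]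
  rw [setIntegral_congr_fun (g := fun _ => (0:ℝ)) measurableSet_Ioo h]
  simp

theorem vel_comp_eq {σ : ℝ → ℝ} (hσ : ContDiff ℝ (⊤:ℕ∞) σ)
    (hc : ContMDiff 𝓘(ℝ, ℝ) (𝓡 m) (⊤ : ℕ∞) c) (t : ℝ) :
    vel γ (c ∘ σ) t = deriv σ t • vel γ c (σ t) := by
  have hσm : ContMDiff 𝓘(ℝ, ℝ) 𝓘(ℝ, ℝ) (⊤ : ℕ∞) σ := hσ.contMDiff
  have h1 : mfderiv 𝓘(ℝ, ℝ) (𝓡 m) (c ∘ σ) t =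
      (mfderiv 𝓘(ℝ, ℝ) (𝓡 m) c (σ t)).comp (mfderiv 𝓘(ℝ, ℝ) 𝓘(ℝ, ℝ) σ t) :=
    mfderiv_comp t ((hc (σ t)).mdifferentiableAt (by simp)) ((hσm t).mdifferentiableAt (by simp))
  have h2 : (mfderiv 𝓘(ℝ, ℝ) 𝓘(ℝ, ℝ) σ t : ℝ →L[ℝ] ℝ) (1:ℝ) = deriv σ t := by
    rw [mfderiv_eq_fderiv]
    rfl
  unfold vel
  rw [h1]
  have : (c ∘ σ) t = c (σ t) := rfl
  rw [this]
  have h3 : ((mfderiv 𝓘(ℝ, ℝ) (𝓡 m) c (σ t)).comp (mfderiv 𝓘(ℝ, ℝ) 𝓘(ℝ, ℝ) σ t)) (1:ℝ)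
      = (mfderiv 𝓘(ℝ, ℝ) (𝓡 m) c (σ t)) (deriv σ t • (1:ℝ)) := by
    show (mfderiv 𝓘(ℝ, ℝ) (𝓡 m) c (σ t)) ((mfderiv 𝓘(ℝ, ℝ) 𝓘(ℝ, ℝ) σ t) (1:ℝ)) = _
    rw [h2]
    exact congrArg (mfderiv 𝓘(ℝ, ℝ) (𝓡 m) c (σ t)) (mul_one (deriv σ t)).symm
  rw [h3]
  erw [ContinuousLinearMap.map_smul, ContinuousLinearMap.map_smul]



structure GoodPath (m : ℕ) {M : Type} [TopologicalSpace M]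
    [ChartedSpace (EuclideanSpace ℝ (Fin m)) M] (x y : M) (c : ℝ → M) : Prop where
  smooth : ContMDiff 𝓘(ℝ, ℝ) (𝓡 m) (⊤ : ℕ∞) c
  left : ∀ t ≤ (0:ℝ), c t = x
  right : ∀ t, (1:ℝ) ≤ t → c t = y

variable {γ : ∀ x : M, TangentSpace (𝓡 m) x →L[ℝ] ℝ} {c c₁ c₂ : ℝ → M}

/-- chain rule: if `g` is a primitive of `γ` near `c t`, then `g ∘ c` has derivative `vel γ c t`. -/
theorem hasDerivAt_comp_curve {g : M → ℝ} {u : Set M} (hu : IsOpen u)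
    (hg : ContMDiffOn (𝓡 m) 𝓘(ℝ, ℝ) (⊤ : ℕ∞) g u)
    (hγ : ∀ x ∈ u, (mfderiv (𝓡 m) 𝓘(ℝ, ℝ) g x : TangentSpace (𝓡 m) x →L[ℝ] ℝ) = γ x)
    (hc : ContMDiff 𝓘(ℝ, ℝ) (𝓡 m) (⊤ : ℕ∞) c) {t : ℝ} (ht : c t ∈ u) :
    HasDerivAt (fun s => g (c s)) (vel γ c t) t := by
  have hgat : ContMDiffAt (𝓡 m) 𝓘(ℝ, ℝ) (⊤ : ℕ∞) g (c t) := hg.contMDiffAt (hu.mem_nhds ht)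
  have hgc : MDifferentiableAt 𝓘(ℝ, ℝ) 𝓘(ℝ, ℝ) (g ∘ c) t :=
    (hgat.mdifferentiableAt (by simp)).comp t ((hc t).mdifferentiableAt (by simp))
  have hd : DifferentiableAt ℝ (g ∘ c) t := mdifferentiableAt_iff_differentiableAt.1 hgc
  have h1 : mfderiv 𝓘(ℝ, ℝ) 𝓘(ℝ, ℝ) (g ∘ c) t =
      (mfderiv (𝓡 m) 𝓘(ℝ, ℝ) g (c t)).comp (mfderiv 𝓘(ℝ, ℝ) (𝓡 m) c t) :=
    mfderiv_comp t (hgat.mdifferentiableAt (by simp)) ((hc t).mdifferentiableAt (by simp))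
  have h2 : fderiv ℝ (g ∘ c) t 1 = vel γ c t := by
    rw [← mfderiv_eq_fderiv, h1]
    simp only [vel, hγ _ ht]
    rfl
  have := hd.hasFDerivAt.hasDerivAt
  rw [h2] at this
  exact this

/-- the integrand is continuous (using closedness of `γ`). -/
theorem vel_continuous (hγ : Closed γ) (hc : ContMDiff 𝓘(ℝ, ℝ) (𝓡 m) (⊤ : ℕ∞) c) :
    Continuous (vel γ c) := by
  rw [continuous_iff_continuousAt]
  intro t
  obtain ⟨u, hu, g, hg, hgγ⟩ := hγ (c t)
  have hu' : IsOpen (interior u) := isOpen_interior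
  have hgi : ContMDiffOn (𝓡 m) 𝓘(ℝ, ℝ) (⊤ : ℕ∞) g (interior u) := hg.mono interior_subset
  have hγi : ∀ x ∈ interior u, (mfderiv (𝓡 m) 𝓘(ℝ, ℝ) g x : TangentSpace (𝓡 m) x →L[ℝ] ℝ) = γ x :=
    fun x hx => hgγ x (interior_subset hx)
  have hct : c t ∈ interior u := mem_interior_iff_mem_nhds.2 hu
  set s : Set ℝ := c ⁻¹' (interior u) with hs
  have hso : IsOpen s := hu'.preimage hc.continuous
  have hts : t ∈ s := hct
  have hderiv : ∀ τ ∈ s, HasDerivAt (fun σ => g (c σ)) (vel γ c τ) τ := fun τ hτ =>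
    hasDerivAt_comp_curve hu' hgi hγi hc hτ
  -- vel = deriv (g ∘ c) on s, and the latter is continuous on s
  have hgcs : ContDiffOn ℝ (⊤:ℕ∞) (fun σ => g (c σ)) s :=
    (hgi.comp (hc.contMDiffOn) (fun τ hτ => hτ)).contDiffOn
  have hcd : ContinuousOn (deriv fun σ => g (c σ)) s :=
    hgcs.continuousOn_deriv_of_isOpen hso (by exact_mod_cast le_top)
  have heq : ∀ τ ∈ s, vel γ c τ = deriv (fun σ => g (c σ)) τ := fun τ hτ =>
    ((hderiv τ hτ).deriv).symm
  refine ContinuousAt.congr (hcd.continuousAt (hso.mem_nhds hts)) ?_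
  exact Filter.eventuallyEq_of_mem (hso.mem_nhds hts) (fun τ hτ => (heq τ hτ).symm)

theorem vel_intervalIntegrable (hγ : Closed γ) (hc : ContMDiff 𝓘(ℝ, ℝ) (𝓡 m) (⊤ : ℕ∞) c) (a b : ℝ) :
    IntervalIntegrable (vel γ c) volume a b :=
  (vel_continuous hγ hc).intervalIntegrable a b

/-- FTC along a curve staying in the domain of a primitive. -/
theorem integral_vel_eq_sub (hγ : Closed γ) {g : M → ℝ} {u : Set M} (hu : IsOpen u)
    (hg : ContMDiffOn (𝓡 m) 𝓘(ℝ, ℝ) (⊤ : ℕ∞) g u)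
    (hgγ : ∀ x ∈ u, (mfderiv (𝓡 m) 𝓘(ℝ, ℝ) g x : TangentSpace (𝓡 m) x →L[ℝ] ℝ) = γ x)
    (hc : ContMDiff 𝓘(ℝ, ℝ) (𝓡 m) (⊤ : ℕ∞) c) {a b : ℝ} (hab : ∀ t ∈ uIcc a b, c t ∈ u) :
    ∫ t in a..b, vel γ c t = g (c b) - g (c a) :=
  integral_eq_sub_of_hasDerivAt
    (fun t ht => hasDerivAt_comp_curve hu hg hgγ hc (hab t ht))
    (vel_intervalIntegrable hγ hc a b)


theorem integral_vel_comp (hγc : Closed γ) {σ : ℝ → ℝ} (hσ : ContDiff ℝ (⊤:ℕ∞) σ)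
    (hc : ContMDiff 𝓘(ℝ, ℝ) (𝓡 m) (⊤ : ℕ∞) c) (a b : ℝ) :
    ∫ t in a..b, vel γ (c ∘ σ) t = ∫ t in σ a..σ b, vel γ c t := by
  have hd : ∀ x ∈ uIcc a b, HasDerivAt σ (deriv σ x) x := fun x _ =>
    ((hσ.differentiable (by simp)) x).hasDerivAt
  have h := intervalIntegral.integral_comp_smul_deriv hd
    ((hσ.continuous_deriv (by exact_mod_cast le_top)).continuousOn) (vel_continuous hγc hc)
  rw [← h]
  exact intervalIntegral.integral_congr fun t _ => (vel_comp_eq hσ hc t)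

/-- concatenation of good paths -/
def cat (c₁ c₂ : ℝ → M) : ℝ → M := fun t => if t ≤ 1/2 then c₁ (3*t) else c₂ (3*t - 2)

theorem cat_eqOn_left {x y z : M} (h₁ : GoodPath m x y c₁) (h₂ : GoodPath m y z c₂) :
    EqOn (cat c₁ c₂) (fun t => c₁ (3*t)) (Iio (2/3 : ℝ)) := by
  intro t ht
  simp only [mem_Iio] at ht
  by_cases h : t ≤ 1/2
  · simp only [cat, if_pos h]
  · push_neg at h
    have e1 : c₂ (3*t - 2) = y := h₂.left _ (by linarith)
    have e2 : c₁ (3*t) = y := h₁.right _ (by linarith)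
    simp only [cat, if_neg (not_le.2 h)]
    rw [e1, e2]

theorem cat_eqOn_right {x y z : M} (h₁ : GoodPath m x y c₁) (h₂ : GoodPath m y z c₂) :
    EqOn (cat c₁ c₂) (fun t => c₂ (3*t - 2)) (Ioi (1/3 : ℝ)) := by
  intro t ht
  simp only [mem_Ioi] at ht
  by_cases h : t ≤ 1/2
  · have e1 : c₁ (3*t) = y := h₁.right _ (by linarith)
    have e2 : c₂ (3*t - 2) = y := h₂.left _ (by linarith)
    simp only [cat, if_pos h]
    rw [e1, e2]
  · simp only [cat, if_neg h]

theorem contMDiff_affine_comp (hc : ContMDiff 𝓘(ℝ, ℝ) (𝓡 m) (⊤ : ℕ∞) c) (p q : ℝ) :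
    ContMDiff 𝓘(ℝ, ℝ) (𝓡 m) (⊤ : ℕ∞) (fun t => c (p*t + q)) := by
  have h : ContMDiff 𝓘(ℝ, ℝ) 𝓘(ℝ, ℝ) (⊤ : ℕ∞) (fun t : ℝ => p*t + q) :=
    (((contDiff_const.mul contDiff_id).add contDiff_const : ContDiff ℝ (⊤:ℕ∞) _)).contMDiff
  exact hc.comp h

theorem GoodPath.concat {x y z : M} (h₁ : GoodPath m x y c₁) (h₂ : GoodPath m y z c₂) :
    GoodPath m x z (cat c₁ c₂) := by
  constructor
  · intro t
    rcases lt_or_ge t (2/3 : ℝ) with ht | ht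
    · have hs : ContMDiff 𝓘(ℝ, ℝ) (𝓡 m) (⊤ : ℕ∞) (fun t => c₁ (3*t)) := by
        simpa using contMDiff_affine_comp h₁.smooth 3 0
      exact (hs t).congr_of_eventuallyEq
        (eventuallyEq_of_mem (isOpen_Iio.mem_nhds ht) (cat_eqOn_left h₁ h₂))
    · have hs : ContMDiff 𝓘(ℝ, ℝ) (𝓡 m) (⊤ : ℕ∞) (fun t => c₂ (3*t - 2)) := by
        have := contMDiff_affine_comp h₂.smooth 3 (-2)
        simpa [sub_eq_add_neg] using this
      refine (hs t).congr_of_eventuallyEq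
        (eventuallyEq_of_mem (isOpen_Ioi.mem_nhds ?_) (cat_eqOn_right h₁ h₂))
      simp only [mem_Ioi]; linarith
  · intro t ht
    have : t ≤ 1/2 := by linarith
    simp only [cat, if_pos this]
    exact h₁.left _ (by linarith)
  · intro t ht
    have : ¬ (t ≤ 1/2) := by push_neg; linarith
    simp only [cat, if_neg this]
    exact h₂.right _ (by linarith)

theorem per_trans (hγc : Closed γ) {x y z : M} (h₁ : GoodPath m x y c₁) (h₂ : GoodPath m y z c₂) :
    per γ (cat c₁ c₂) = per γ c₁ + per γ c₂ := by
  have htr : ContMDiff 𝓘(ℝ, ℝ) (𝓡 m) (⊤ : ℕ∞) (cat c₁ c₂) := (h₁.concat h₂).smooth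
  have hint1 : ∀ a b : ℝ, IntervalIntegrable (vel γ (cat c₁ c₂)) volume a b :=
    vel_intervalIntegrable hγc htr
  have hsplit : per γ (cat c₁ c₂)
      = (∫ t in (0:ℝ)..(1/2:ℝ), vel γ (cat c₁ c₂) t)
        + ∫ t in (1/2:ℝ)..(1:ℝ), vel γ (cat c₁ c₂) t :=
    (intervalIntegral.integral_add_adjacent_intervals (hint1 0 (1/2)) (hint1 (1/2) 1)).symm
  -- left piece
  have hc13 : ContMDiff 𝓘(ℝ, ℝ) (𝓡 m) (⊤ : ℕ∞) (fun t => c₁ (3*t)) := by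
    simpa using contMDiff_affine_comp h₁.smooth 3 0
  have hl : (∫ t in (0:ℝ)..(1/2:ℝ), vel γ (cat c₁ c₂) t) = per γ c₁ := by
    have e1 : (∫ t in (0:ℝ)..(1/2:ℝ), vel γ (cat c₁ c₂) t)
        = ∫ t in (0:ℝ)..(1/2:ℝ), vel γ (c₁ ∘ fun t => 3*t) t := by
      refine integral_vel_congr (by norm_num) fun t ht => ?_
      refine vel_congr isOpen_Iio (fun s hs => ?_) (show t ∈ Iio (2/3:ℝ) by
        rcases ht with ⟨h1, h2⟩; simp only [mem_Iio]; linarith)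
      exact cat_eqOn_left h₁ h₂ hs
    have e2 : (∫ t in (0:ℝ)..(1/2:ℝ), vel γ (c₁ ∘ fun t => 3*t) t)
        = ∫ t in (3*(0:ℝ))..(3*(1/2:ℝ)), vel γ c₁ t :=
      integral_vel_comp hγc (contDiff_const.mul contDiff_id) h₁.smooth 0 (1/2)
    have e3 : (∫ t in (3*(0:ℝ))..(3*(1/2:ℝ)), vel γ c₁ t)
        = (∫ t in (0:ℝ)..(1:ℝ), vel γ c₁ t) + ∫ t in (1:ℝ)..(3/2:ℝ), vel γ c₁ t := by
      rw [show (3*(0:ℝ)) = 0 by norm_num, show (3*(1/2:ℝ)) = 3/2 by norm_num]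
      exact (intervalIntegral.integral_add_adjacent_intervals
        (vel_intervalIntegrable hγc h₁.smooth 0 1)
        (vel_intervalIntegrable hγc h₁.smooth 1 (3/2))).symm
    have e4 : (∫ t in (1:ℝ)..(3/2:ℝ), vel γ c₁ t) = 0 := by
      refine integral_vel_zero (by norm_num) fun t ht => ?_
      exact vel_const_on isOpen_Ioi (fun s hs => h₁.right s (le_of_lt hs)) ht.1
    rw [e1, e2, e3, e4, add_zero]
    rfl
  -- right piece
  have hr : (∫ t in (1/2:ℝ)..(1:ℝ), vel γ (cat c₁ c₂) t) = per γ c₂ := by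
    have e1 : (∫ t in (1/2:ℝ)..(1:ℝ), vel γ (cat c₁ c₂) t)
        = ∫ t in (1/2:ℝ)..(1:ℝ), vel γ (c₂ ∘ fun t => 3*t - 2) t := by
      refine integral_vel_congr (by norm_num) fun t ht => ?_
      refine vel_congr isOpen_Ioi (fun s hs => cat_eqOn_right h₁ h₂ hs)
        (show t ∈ Ioi (1/3:ℝ) by rcases ht with ⟨h1, h2⟩; simp only [mem_Ioi]; linarith)
    have e2 : (∫ t in (1/2:ℝ)..(1:ℝ), vel γ (c₂ ∘ fun t => 3*t - 2) t)
        = ∫ t in (3*(1/2:ℝ)-2)..(3*(1:ℝ)-2), vel γ c₂ t :=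
      integral_vel_comp hγc ((contDiff_const.mul contDiff_id).sub contDiff_const)
        h₂.smooth (1/2) 1
    have e3 : (∫ t in (3*(1/2:ℝ)-2)..(3*(1:ℝ)-2), vel γ c₂ t)
        = (∫ t in (-(1/2):ℝ)..(0:ℝ), vel γ c₂ t) + ∫ t in (0:ℝ)..(1:ℝ), vel γ c₂ t := by
      rw [show (3*(1/2:ℝ)-2) = -(1/2) by norm_num, show (3*(1:ℝ)-2) = 1 by norm_num]
      exact (intervalIntegral.integral_add_adjacent_intervals
        (vel_intervalIntegrable hγc h₂.smooth (-(1/2)) 0)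
        (vel_intervalIntegrable hγc h₂.smooth 0 1)).symm
    have e4 : (∫ t in (-(1/2):ℝ)..(0:ℝ), vel γ c₂ t) = 0 := by
      refine integral_vel_zero (by norm_num) fun t ht => ?_
      exact vel_const_on isOpen_Iio (fun s hs => h₂.left s (le_of_lt hs)) ht.2
    rw [e1, e2, e3, e4, zero_add]
    rfl
  rw [hsplit, hl, hr]

/-- reversal -/
def rev (c : ℝ → M) : ℝ → M := fun t => c (1 - t)

theorem GoodPath.rev' {x y : M} (h : GoodPath m x y c) : GoodPath m y x (rev c) := by
  refine ⟨?_, fun t ht => h.right _ (by linarith), fun t ht => h.left _ (by linarith)⟩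
  have h2 := contMDiff_affine_comp h.smooth (-1) 1
  have h3 : (fun t : ℝ => c ((-1)*t + 1)) = rev c := by
    funext t; exact congrArg c (by ring)
  rwa [h3] at h2

theorem per_rev (hγc : Closed γ) {x y : M} (h : GoodPath m x y c) :
    per γ (rev c) = - per γ c := by
  have e1 : per γ (rev c) = ∫ t in ((1:ℝ)-0)..((1:ℝ)-1), vel γ c t := by
    have : rev c = c ∘ fun t : ℝ => 1 - t := rfl
    rw [per, this]
    exact integral_vel_comp hγc (contDiff_const.sub contDiff_id) h.smooth 0 1
  rw [e1, show ((1:ℝ)-0) = 1 by norm_num, show ((1:ℝ)-1) = 0 by norm_num,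
    intervalIntegral.integral_symm]
  rfl


theorem per_loop_int (hγc : Closed γ)
    (hint : ∀ c : ℝ → M, ContMDiff 𝓘(ℝ, ℝ) (𝓡 m) (⊤ : ℕ∞) c → (∀ t : ℝ, c (t + 1) = c t) →
      ∃ k : ℤ, (∫ t in (0:ℝ)..1, γ (c t) (mfderiv 𝓘(ℝ, ℝ) (𝓡 m) c t (1 : ℝ))) = k)
    {x₀ : M} {d : ℝ → M} (hd : GoodPath m x₀ x₀ d) : ∃ k : ℤ, per γ d = k := by
  set φ : ℝ → ℝ := fun t => Real.smoothTransition (3*t - 1) with hφdef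
  have hφc : ContDiff ℝ (⊤:ℕ∞) φ :=
    Real.smoothTransition.contDiff.comp ((contDiff_const.mul contDiff_id).sub contDiff_const)
  have hφ0 : ∀ t ≤ (1/3:ℝ), φ t = 0 := fun t ht =>
    Real.smoothTransition.zero_of_nonpos (by linarith)
  have hφ1 : ∀ t, (2/3:ℝ) ≤ t → φ t = 1 := fun t ht =>
    Real.smoothTransition.one_of_one_le (by linarith)
  set dφ : ℝ → M := d ∘ φ with hdφdef
  have hdφs : ContMDiff 𝓘(ℝ, ℝ) (𝓡 m) (⊤ : ℕ∞) dφ := hd.smooth.comp hφc.contMDiff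
  have hdφ0 : ∀ t ≤ (1/3:ℝ), dφ t = x₀ := by
    intro t ht; show d (φ t) = x₀; rw [hφ0 t ht]; exact hd.left 0 le_rfl
  have hdφ1 : ∀ t, (2/3:ℝ) ≤ t → dφ t = x₀ := by
    intro t ht; show d (φ t) = x₀; rw [hφ1 t ht]; exact hd.right 1 le_rfl
  set e : ℝ → M := fun t => dφ (Int.fract t) with hedef
  have hnear : ∀ (k : ℤ) (s : ℝ), |s - (k:ℝ)| < 1/3 → e s = x₀ := by
    intro k s hs
    obtain ⟨hl, hr⟩ := abs_lt.1 hs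
    have h1 : e s = dφ (Int.fract (s - (k:ℝ))) := by
      show dφ (Int.fract s) = _
      rw [Int.fract_sub_intCast s k]
    rw [h1]
    rcases le_or_gt 0 (s - (k:ℝ)) with h0 | h0
    · rw [Int.fract_eq_self.2 ⟨h0, by linarith⟩]
      exact hdφ0 _ (by linarith)
    · have h2 : Int.fract (s - (k:ℝ)) = s - (k:ℝ) + 1 := by
        rw [← Int.fract_add_one, Int.fract_eq_self.2 ⟨by linarith, by linarith⟩]
      rw [h2]
      exact hdφ1 _ (by linarith)
  have hfr : ∀ s : ℝ, ∀ n : ℤ, (n:ℝ) < s → s < (n:ℝ) + 1 → Int.fract s = s - (n:ℝ) := by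
    intro s n h1 h2
    rw [← Int.fract_sub_intCast s n, Int.fract_eq_self.2 ⟨by linarith, by linarith⟩]
  have hes : ContMDiff 𝓘(ℝ, ℝ) (𝓡 m) (⊤ : ℕ∞) e := by
    intro t
    by_cases hex : ∃ k : ℤ, |t - (k:ℝ)| < 1/3
    · obtain ⟨k, hk⟩ := hex
      refine (contMDiff_const (c := x₀)).contMDiffAt.congr_of_eventuallyEq ?_
      obtain ⟨hl, hr⟩ := abs_lt.1 hk
      refine eventuallyEq_of_mem (isOpen_Ioo.mem_nhds
        (show t ∈ Ioo ((k:ℝ) - 1/3) ((k:ℝ) + 1/3) from ⟨by linarith, by linarith⟩))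
        (fun s hs => ?_)
      exact hnear k s (abs_lt.2 ⟨by linarith [hs.1], by linarith [hs.2]⟩)
    · push_neg at hex
      set n := ⌊t⌋ with hn
      have hfr0 : (0:ℝ) ≤ t - (n:ℝ) := by
        have := Int.floor_le t; linarith
      have hfr1 : t - (n:ℝ) < 1 := by
        have := Int.lt_floor_add_one t; linarith
      have h1 : (1/3:ℝ) ≤ t - (n:ℝ) := by
        have := hex n
        rwa [abs_of_nonneg hfr0] at this
      have h2 : t - (n:ℝ) ≤ 2/3 := by
        have h3 := hex (n + 1)
        have h4 : |t - ((n:ℝ) + 1)| = (n:ℝ) + 1 - t := by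
          rw [abs_of_nonpos (by linarith)]; ring
      -- fix cast: ((n+1 : ℤ):ℝ) = n + 1
        have h5 : ((n + 1 : ℤ):ℝ) = (n:ℝ) + 1 := by push_cast; ring
        rw [h5, h4] at h3
        linarith
      have htm : t ∈ Ioo ((n:ℝ)) ((n:ℝ)+1) := ⟨by linarith, by linarith⟩
      have hsm : ContMDiff 𝓘(ℝ, ℝ) (𝓡 m) (⊤ : ℕ∞) (fun s => dφ (1*s + (-(n:ℝ)))) :=
        contMDiff_affine_comp hdφs 1 (-(n:ℝ))
      refine (hsm t).congr_of_eventuallyEq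
        (eventuallyEq_of_mem (isOpen_Ioo.mem_nhds htm) fun s hs => ?_)
      show dφ (Int.fract s) = dφ (1*s + (-(n:ℝ)))
      rw [hfr s n hs.1 hs.2]
      congr 1
      ring
  have hper : ∀ t : ℝ, e (t + 1) = e t := by
    intro t; show dφ (Int.fract (t+1)) = dφ (Int.fract t); rw [Int.fract_add_one]
  obtain ⟨k, hk⟩ := hint e hes hper
  refine ⟨k, ?_⟩
  have h5 : per γ e = per γ dφ := by
    refine integral_vel_congr zero_le_one fun τ hτ => ?_
    refine vel_congr isOpen_Ioo (fun s hs => ?_) hτ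
    show dφ (Int.fract s) = dφ s
    rw [Int.fract_eq_self.2 ⟨le_of_lt hs.1, hs.2⟩]
  have h6 : per γ dφ = ∫ t in (φ 0)..(φ 1), vel γ d t :=
    integral_vel_comp hγc hφc hd.smooth 0 1
  rw [hφ0 0 (by norm_num), hφ1 1 (by norm_num)] at h6
  have h7 : per γ e = (k:ℝ) := hk
  rw [h5, h6] at h7
  exact h7

theorem per_diff_int (hγc : Closed γ)
    (hint : ∀ c : ℝ → M, ContMDiff 𝓘(ℝ, ℝ) (𝓡 m) (⊤ : ℕ∞) c → (∀ t : ℝ, c (t + 1) = c t) →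
      ∃ k : ℤ, (∫ t in (0:ℝ)..1, γ (c t) (mfderiv 𝓘(ℝ, ℝ) (𝓡 m) c t (1 : ℝ))) = k)
    {x y b : M} {cσ : ℝ → M}
    (h₁ : GoodPath m b x c₁) (hσ : GoodPath m x y cσ) (h₂ : GoodPath m b y c₂) :
    ∃ k : ℤ, per γ c₁ + per γ cσ - per γ c₂ = k := by
  have hloop : GoodPath m b b (cat (cat c₁ cσ) (rev c₂)) := (h₁.concat hσ).concat h₂.rev'
  obtain ⟨k, hk⟩ := per_loop_int hγc hint hloop
  rw [per_trans hγc (h₁.concat hσ) h₂.rev', per_trans hγc h₁ hσ, per_rev hγc h₂] at hk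
  exact ⟨k, by linarith⟩


/-- Around every point there is an open set `u' ⊆ v` such that every point of `u'` is joined
to `x` by a good path staying inside `u'`. -/
theorem chart_nbhd (x : M) {v : Set M} (hv : v ∈ nhds x) :
    ∃ u' : Set M, IsOpen u' ∧ x ∈ u' ∧ u' ⊆ v ∧
      ∀ y ∈ u', ∃ c : ℝ → M, GoodPath m x y c ∧ ∀ t, c t ∈ u' := by
  set e := extChartAt (𝓡 m) x with hedef
  have hto : IsOpen e.target := isOpen_extChartAt_target x
  have hxt : e x ∈ e.target := mem_extChartAt_target x
  have hsymm_v : e.symm ⁻¹' v ∈ nhds (e x) :=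
    (continuousAt_extChartAt_symm x).preimage_mem_nhds (by rw [extChartAt_to_inv]; exact hv)
  obtain ⟨ε, hε, hball⟩ := Metric.mem_nhds_iff.1 (inter_mem (hto.mem_nhds hxt) hsymm_v)
  set u' : Set M := e.source ∩ e ⁻¹' (Metric.ball (e x) ε) with hu'def
  have hu'open : IsOpen u' :=
    (continuousOn_extChartAt x).isOpen_inter_preimage (isOpen_extChartAt_source x)
      Metric.isOpen_ball
  have hxu' : x ∈ u' :=
    ⟨mem_extChartAt_source x, by simp only [mem_preimage]; exact Metric.mem_ball_self hε⟩
  have hu'v : u' ⊆ v := by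
    rintro y ⟨hy1, hy2⟩
    have h1 : e y ∈ e.symm ⁻¹' v := (hball hy2).2
    rwa [mem_preimage, e.left_inv hy1] at h1
  refine ⟨u', hu'open, hxu', hu'v, fun y hy => ?_⟩
  set φ : ℝ → ℝ := Real.smoothTransition with hphidef
  set z : ℝ → EuclideanSpace ℝ (Fin m) := fun t => e x + φ t • (e y - e x) with hzdef
  have hzball : ∀ t, z t ∈ Metric.ball (e x) ε := by
    intro t
    rw [mem_ball_iff_norm]
    have h1 : z t - e x = φ t • (e y - e x) := by simp [hzdef]
    rw [h1, norm_smul]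
    have h2 : ‖e y - e x‖ < ε := by
      have := hy.2
      rwa [mem_preimage, Metric.mem_ball, dist_eq_norm] at this
    have h3 : ‖φ t‖ ≤ 1 := by
      rw [Real.norm_eq_abs, abs_of_nonneg (Real.smoothTransition.nonneg t)]
      exact Real.smoothTransition.le_one t
    calc ‖φ t‖ * ‖e y - e x‖ ≤ 1 * ‖e y - e x‖ :=
          mul_le_mul_of_nonneg_right h3 (norm_nonneg _)
      _ = ‖e y - e x‖ := one_mul _
      _ < ε := h2
  have hztar : ∀ t, z t ∈ e.target := fun t => (hball (hzball t)).1
  set c : ℝ → M := fun t => e.symm (z t) with hcdef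
  have hcu' : ∀ t, c t ∈ u' := by
    intro t
    refine ⟨e.map_target (hztar t), ?_⟩
    simp only [mem_preimage]
    rw [e.right_inv (hztar t)]
    exact hzball t
  have hzsm : ContMDiff 𝓘(ℝ, ℝ) 𝓘(ℝ, EuclideanSpace ℝ (Fin m)) (⊤ : ℕ∞) z := by
    refine ContDiff.contMDiff ?_
    exact ((contDiff_const (c := e x)).add
      (Real.smoothTransition.contDiff.smul (contDiff_const (c := e y - e x))) :
      ContDiff ℝ (⊤:ℕ∞) _)
  refine ⟨c, ⟨fun t => ?_, fun t ht => ?_, fun t ht => ?_⟩, hcu'⟩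
  · have hsymmAt : ContMDiffAt 𝓘(ℝ, EuclideanSpace ℝ (Fin m)) (𝓡 m) (⊤ : ℕ∞) e.symm (z t) :=
      (contMDiffOn_extChartAt_symm x).contMDiffAt (hto.mem_nhds (hztar t))
    exact hsymmAt.comp t (hzsm t)
  · have h1 : φ t = 0 := Real.smoothTransition.zero_of_nonpos ht
    show e.symm (z t) = x
    have h2 : z t = e x := by rw [hzdef]; simp [h1]
    rw [h2]
    exact extChartAt_to_inv x
  · have h1 : φ t = 1 := Real.smoothTransition.one_of_one_le ht
    show e.symm (z t) = y
    have h2 : z t = e y := by rw [hzdef]; simp [h1]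
    rw [h2]
    exact e.left_inv hy.1

/-- every point is reachable from any point of its connected component chosen as basepoint. -/
theorem reachable_of_mem_component {x y : M} (h : y ∈ connectedComponent x) :
    ∃ c : ℝ → M, GoodPath m x y c := by
  set A : Set M := {y | ∃ c : ℝ → M, GoodPath m x y c} with hA
  have hopen : ∀ z ∈ A, ∃ w ∈ nhds z, w ⊆ A := by
    rintro z ⟨c, hc⟩
    obtain ⟨u', hu'o, hzu', -, hpath⟩ := chart_nbhd (m := m) z univ_mem
    refine ⟨u', hu'o.mem_nhds hzu', fun w hw => ?_⟩
    obtain ⟨c₂, hc₂, -⟩ := hpath w hw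
    exact ⟨cat c c₂, hc.concat hc₂⟩
  have hAopen : IsOpen A := by
    rw [isOpen_iff_mem_nhds]
    rintro z hz
    obtain ⟨w, hw, hwA⟩ := hopen z hz
    exact mem_of_superset hw hwA
  have hAclosed : IsClosed A := by
    rw [← isOpen_compl_iff, isOpen_iff_mem_nhds]
    intro z hz
    obtain ⟨u', hu'o, hzu', -, hpath⟩ := chart_nbhd (m := m) z univ_mem
    refine mem_of_superset (hu'o.mem_nhds hzu') fun w hw => ?_
    intro hwA
    obtain ⟨c₁, hc₁⟩ := hwA
    obtain ⟨c₂, hc₂, -⟩ := hpath w hw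
    exact hz ⟨cat c₁ (rev c₂), hc₁.concat hc₂.rev'⟩
  have hxA : x ∈ A := ⟨fun _ => x, ⟨contMDiff_const, fun _ _ => rfl, fun _ _ => rfl⟩⟩
  exact (IsClopen.connectedComponent_subset ⟨hAclosed, hAopen⟩ hxA) h

/-- points joined by a good path lie in the same connected component. -/
theorem component_eq_of_goodPath {x y : M} {c : ℝ → M} (h : GoodPath m x y c) :
    connectedComponent y = connectedComponent x := by
  have himg : IsPreconnected (c '' Icc (0:ℝ) 1) :=
    (isPreconnected_Icc).image c (h.smooth.continuous.continuousOn)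
  have hx : x ∈ c '' Icc (0:ℝ) 1 := ⟨0, ⟨le_rfl, zero_le_one⟩, h.left 0 le_rfl⟩
  have hy : y ∈ c '' Icc (0:ℝ) 1 := ⟨1, ⟨zero_le_one, le_rfl⟩, h.right 1 le_rfl⟩
  exact connectedComponent_eq (himg.subset_connectedComponent hy hx)


theorem mfderiv_circleExp_ne_zero (t : ℝ) :
    mfderiv 𝓘(ℝ, ℝ) (𝓡 1) Circle.exp t (1:ℝ) ≠ 0 := by
  haveI := finrank_real_complex_fact'
  have hι : ContMDiff (𝓡 1) 𝓘(ℝ, ℂ) (⊤ : ℕ∞) (fun z : Circle => (z:ℂ)) := contMDiff_coe_sphere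
  have hcomp : (fun s : ℝ => ((Circle.exp s : Circle) : ℂ)) = circleMap 0 1 := by
    funext s
    simp [Circle.coe_exp, circleMap]
  have hd : HasDerivAt (fun s : ℝ => ((Circle.exp s : Circle) : ℂ))
      (circleMap 0 1 t * Complex.I) t := by
    rw [hcomp]; exact hasDerivAt_circleMap 0 1 t
  have hne : circleMap 0 1 t * Complex.I ≠ 0 :=
    mul_ne_zero (by simp [circleMap, Complex.exp_ne_zero]) Complex.I_ne_zero
  intro h0
  have h1 : mfderiv 𝓘(ℝ, ℝ) 𝓘(ℝ, ℂ) (fun s : ℝ => ((Circle.exp s : Circle) : ℂ)) t =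
      (mfderiv (𝓡 1) 𝓘(ℝ, ℂ) (fun z : Circle => (z:ℂ)) (Circle.exp t)).comp
        (mfderiv 𝓘(ℝ, ℝ) (𝓡 1) Circle.exp t) :=
    mfderiv_comp t ((hι _).mdifferentiableAt (by simp))
      ((contMDiff_circleExp (m := 1) t).mdifferentiableAt (by simp))
  have h2 : mfderiv 𝓘(ℝ, ℝ) 𝓘(ℝ, ℂ) (fun s : ℝ => ((Circle.exp s : Circle) : ℂ)) t (1:ℝ)
      = circleMap 0 1 t * Complex.I := by
    rw [mfderiv_eq_fderiv]
    have := hd.deriv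
    rw [← this]
    rfl
  erw [h1, ContinuousLinearMap.comp_apply, h0, map_zero] at h2
  exact hne h2.symm

theorem finrank_tangent_circle (z : Circle) : Module.finrank ℝ (TangentSpace (𝓡 1) z) = 1 :=
  finrank_euclideanSpace_fin

end Tischler

open Tischler

/-- **Statement 19 (Tischler-type theorem).** Let `M` be a compact smooth manifold and
`γ` a closed `1`-form on `M` (given as a smooth family of cotangent vectors; closedness
is expressed by local exactness: around every point `γ` is the differential of a smooth
function) which is nowhere vanishing and whose de Rham class is integral (all its periods
over smooth loops are integers).  Then there exists a submersion `f : M → S¹` with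
`f^*(dt) = γ`, where `dt` is the canonical (period-one) `1`-form on `S¹`; pulling back
`dt` is expressed through local lifts: locally `f = exp(2πi g)` with `dg = γ`. -/
theorem statement19 {m : ℕ} {M : Type} [TopologicalSpace M]
    [ChartedSpace (EuclideanSpace ℝ (Fin m)) M] [IsManifold (𝓡 m) (⊤ : ℕ∞) M]
    [CompactSpace M]
    (γ : ∀ x : M, TangentSpace (𝓡 m) x →L[ℝ] ℝ)
    -- γ is a closed (smooth) 1-form: it is locally the differential of a smooth function
    (hclosed : ∀ x₀ : M, ∃ u ∈ nhds x₀, ∃ g : M → ℝ, ContMDiffOn (𝓡 m) 𝓘(ℝ, ℝ) (⊤ : ℕ∞) g u ∧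
      ∀ x ∈ u, (mfderiv (𝓡 m) 𝓘(ℝ, ℝ) g x : TangentSpace (𝓡 m) x →L[ℝ] ℝ) = γ x)
    -- γ is nowhere vanishing
    (hnv : ∀ x : M, γ x ≠ 0)
    -- the de Rham class of γ is integral: all periods over smooth loops are integers
    (hint : ∀ c : ℝ → M, ContMDiff 𝓘(ℝ, ℝ) (𝓡 m) (⊤ : ℕ∞) c → (∀ t : ℝ, c (t + 1) = c t) →
      ∃ k : ℤ, (∫ t in (0:ℝ)..1, γ (c t) (mfderiv 𝓘(ℝ, ℝ) (𝓡 m) c t (1 : ℝ))) = k) :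
    ∃ f : M → Circle, ContMDiff (𝓡 m) (𝓡 1) (⊤ : ℕ∞) f ∧
      (∀ x : M, Function.Surjective (mfderiv (𝓡 m) (𝓡 1) f x)) ∧
      ∀ x₀ : M, ∃ u ∈ nhds x₀, ∃ g : M → ℝ, ContMDiffOn (𝓡 m) 𝓘(ℝ, ℝ) (⊤ : ℕ∞) g u ∧
        (∀ x ∈ u, f x = Circle.exp (2 * Real.pi * g x)) ∧
        ∀ x ∈ u, (mfderiv (𝓡 m) 𝓘(ℝ, ℝ) g x : TangentSpace (𝓡 m) x →L[ℝ] ℝ) = γ x := by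
  classical
  by_cases hM : Nonempty M
  case neg =>
    have hE : IsEmpty M := not_nonempty_iff.1 hM
    exact ⟨fun x => isEmptyElim x, fun x => isEmptyElim x, fun x => isEmptyElim x,
      fun x => isEmptyElim x⟩
  case pos =>
  have hγc : Tischler.Closed γ := hclosed
  let pick : Set M → M := fun s => if h : s.Nonempty then h.choose else Classical.arbitrary M
  let b : M → M := fun x => pick (connectedComponent x)
  have hbmem : ∀ x, b x ∈ connectedComponent x := by
    intro x
    have hne : (connectedComponent x).Nonempty := ⟨x, mem_connectedComponent⟩
    show pick (connectedComponent x) ∈ _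
    simp only [pick, dif_pos hne]
    exact hne.choose_spec
  have hbeq : ∀ {x y : M}, connectedComponent x = connectedComponent y → b x = b y := by
    intro x y h
    show pick (connectedComponent x) = pick (connectedComponent y)
    rw [h]
  have hreach : ∀ x : M, ∃ c : ℝ → M, GoodPath m (b x) x c := by
    intro x
    have hx : x ∈ connectedComponent (b x) := by
      exact (connectedComponent_eq (hbmem x)).symm ▸ mem_connectedComponent
    exact reachable_of_mem_component hx
  let cp : M → ℝ → M := fun x => (hreach x).choose
  have hcp : ∀ x, GoodPath m (b x) x (cp x) := fun x => (hreach x).choose_spec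
  let r : M → ℝ := fun x => per γ (cp x)
  let f : M → Circle := fun x => Circle.exp (2 * Real.pi * r x)
  have key : ∀ x₀ : M, ∃ u' ∈ nhds x₀, ∃ g' : M → ℝ, ContMDiffOn (𝓡 m) 𝓘(ℝ, ℝ) (⊤ : ℕ∞) g' u' ∧
      (∀ y ∈ u', f y = Circle.exp (2 * Real.pi * g' y)) ∧
      ∀ y ∈ u', (mfderiv (𝓡 m) 𝓘(ℝ, ℝ) g' y : TangentSpace (𝓡 m) y →L[ℝ] ℝ) = γ y := by
    intro x₀
    obtain ⟨u, hu, g, hg, hgγ⟩ := hclosed x₀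
    have hu₀o : IsOpen (interior u) := isOpen_interior
    have hgu₀ : ContMDiffOn (𝓡 m) 𝓘(ℝ, ℝ) (⊤ : ℕ∞) g (interior u) := hg.mono interior_subset
    have hgγ₀ : ∀ x ∈ interior u,
        (mfderiv (𝓡 m) 𝓘(ℝ, ℝ) g x : TangentSpace (𝓡 m) x →L[ℝ] ℝ) = γ x :=
      fun x hx => hgγ x (interior_subset hx)
    obtain ⟨u', hu'o, hx₀u', hu'sub, hpath⟩ := chart_nbhd (m := m) x₀
      (hu₀o.mem_nhds (mem_interior_iff_mem_nhds.2 hu))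
    set C : ℝ := r x₀ - g x₀ with hC
    refine ⟨u', hu'o.mem_nhds hx₀u', fun y => C + g y, ?_, ?_, ?_⟩
    · exact contMDiffOn_const.add (hgu₀.mono hu'sub)
    · intro y hy
      obtain ⟨σ, hσ, hσin⟩ := hpath y hy
      have hby : b y = b x₀ := hbeq (component_eq_of_goodPath hσ)
      have hc₂ : GoodPath m (b x₀) y (cp y) := hby ▸ hcp y
      obtain ⟨k, hk⟩ := per_diff_int hγc hint (hcp x₀) hσ hc₂
      have hperσ : per γ σ = g y - g x₀ := by
        have h2 := integral_vel_eq_sub hγc hu₀o hgu₀ hgγ₀ hσ.smooth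
          (a := 0) (b := 1) (fun t _ => hu'sub (hσin t))
        rw [hσ.right 1 le_rfl, hσ.left 0 le_rfl] at h2
        exact h2
      have hry : r y = C + g y - k := by
        have h3 : r x₀ + per γ σ - per γ (cp y) = k := hk
        rw [hperσ] at h3
        have h4 : per γ (cp y) = r y := rfl
        rw [h4] at h3
        rw [hC]
        linarith
      show Circle.exp (2 * Real.pi * r y) = Circle.exp (2 * Real.pi * (C + g y))
      rw [hry]
      have harg : 2 * Real.pi * (C + g y - k)
          = 2 * Real.pi * (C + g y) + ((-k : ℤ) : ℝ) * (2 * Real.pi) := by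
        push_cast
        ring
      rw [harg, Circle.exp_add, Circle.exp_int_mul_two_pi, mul_one]
    · intro y hy
      have h5 : (fun y => C + g y) = (fun _ : M => C) + g := rfl
      have h6 : MDifferentiableAt (𝓡 m) 𝓘(ℝ, ℝ) g y :=
        ((hgu₀.contMDiffAt (hu₀o.mem_nhds (hu'sub hy))).mdifferentiableAt (by simp))
      rw [h5, mfderiv_add (mdifferentiableAt_const) h6, mfderiv_const]
      erw [zero_add]
      exact hgγ₀ y (hu'sub hy)
  have hsmooth : ContMDiff (𝓡 m) (𝓡 1) (⊤ : ℕ∞) f := by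
    intro x
    obtain ⟨u', hu', g', hg', hfg, -⟩ := key x
    have h1 : ContMDiffAt (𝓡 m) 𝓘(ℝ, ℝ) (⊤ : ℕ∞) (fun y => 2 * Real.pi * g' y) x :=
      contMDiffAt_const.mul (hg'.contMDiffAt hu')
    have h2 : ContMDiffAt (𝓡 m) (𝓡 1) (⊤ : ℕ∞) (fun y => Circle.exp (2 * Real.pi * g' y)) x :=
      (contMDiff_circleExp.contMDiffAt).comp x h1
    exact h2.congr_of_eventuallyEq (Filter.eventuallyEq_of_mem hu' hfg)
  refine ⟨f, hsmooth, ?_, key⟩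
  intro x
  obtain ⟨u', hu', g', hg', hfg, hg'γ⟩ := key x
  have hx' : x ∈ u' := mem_of_mem_nhds hu'
  set h : M → ℝ := fun y => 2 * Real.pi * g' y with hhdef
  have hhsm : ContMDiffAt (𝓡 m) 𝓘(ℝ, ℝ) (⊤ : ℕ∞) h x := contMDiffAt_const.mul (hg'.contMDiffAt hu')
  have hev : f =ᶠ[nhds x] (Circle.exp ∘ h) := Filter.eventuallyEq_of_mem hu' (fun y hy => hfg y hy)
  have hmf : mfderiv (𝓡 m) (𝓡 1) f x
      = (mfderiv 𝓘(ℝ, ℝ) (𝓡 1) Circle.exp (h x)).comp (mfderiv (𝓡 m) 𝓘(ℝ, ℝ) h x) := by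
    rw [hev.mfderiv_eq]
    exact mfderiv_comp x ((contMDiff_circleExp (m := 1) (h x)).mdifferentiableAt (by simp))
      (hhsm.mdifferentiableAt (by simp))
  have hgd : MDifferentiableAt (𝓡 m) 𝓘(ℝ, ℝ) g' x :=
    (hg'.contMDiffAt hu').mdifferentiableAt (by simp)
  have hmfh : mfderiv (𝓡 m) 𝓘(ℝ, ℝ) h x = (2 * Real.pi) • (γ x) := by
    have h7 : h = (2 * Real.pi) • g' := rfl
    rw [h7, const_smul_mfderiv hgd, hg'γ x hx']
    rfl
  rw [hmf]
  have hDsurj : Function.Surjective (mfderiv 𝓘(ℝ, ℝ) (𝓡 1) Circle.exp (h x)) := by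
    intro w
    obtain ⟨a, ha⟩ := (finrank_eq_one_iff_of_nonzero'
      (mfderiv 𝓘(ℝ, ℝ) (𝓡 1) Circle.exp (h x) (1:ℝ)) (mfderiv_circleExp_ne_zero (h x))).1
      (finrank_tangent_circle _) w
    refine ⟨a, ?_⟩
    have h8 : (a : ℝ) = a • (1:ℝ) := by simp
    erw [h8, ContinuousLinearMap.map_smul]
    exact ha
  have hhsurj : Function.Surjective (mfderiv (𝓡 m) 𝓘(ℝ, ℝ) h x) := by
    rw [hmfh]
    intro a
    have h9 : ∃ v₀ : TangentSpace (𝓡 m) x, γ x v₀ ≠ 0 := by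
      by_contra hall
      push_neg at hall
      exact hnv x (ContinuousLinearMap.ext fun v => by rw [hall v]; rfl)
    obtain ⟨v₀, hv₀⟩ := h9
    have hπ : (2 : ℝ) * Real.pi ≠ 0 := by
      have := Real.pi_ne_zero; positivity
    have key2 : ∀ aa : ℝ,
        ∃ v, ((2 * Real.pi) • γ x : TangentSpace (𝓡 m) x →L[ℝ] ℝ) v = aa := by
      intro aa
      refine ⟨(aa / (2 * Real.pi * γ x v₀)) • v₀, ?_⟩
      rw [ContinuousLinearMap.smul_apply, ContinuousLinearMap.map_smul, smul_eq_mul,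
        smul_eq_mul]
      field_simp
    exact key2 a
  intro w
  obtain ⟨z, hz⟩ := hDsurj w
  obtain ⟨v, hv⟩ := hhsurj z
  refine ⟨v, ?_⟩
  have h10 : (mfderiv 𝓘(ℝ, ℝ) (𝓡 1) Circle.exp (h x)) ((mfderiv (𝓡 m) 𝓘(ℝ, ℝ) h x) v) = w := by
    rw [hv]
    exact hz
  exact h10
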